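/- Size commutation: let i be a size variable, s a size such that s = ∞ or the spine variable of s is different from i, and ρ a size environment. Then for every p ∈ [0,1]: VRed^p_{σ[s/i],ρ} = VRed^p_{σ, ρ[i ↦ ⟦s⟧_ρ]}, DRed^p_{μ[s/i],ρ} = DRed^p_{μ, ρ[i ↦ ⟦s⟧_ρ]}, and TRed^p_{μ[s/i],ρ} = TRed^p_{μ, ρ[i ↦ ⟦s⟧_ρ]}. -/

import Mathlib

open scoped ENNReal

noncomputable section

/-! ### Syntax of the probabilistic λ-calculus λ⊕ (A-normal form) -/

mutual
inductive Val : Type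
  | var : ℕ → Val
  | zero : Val
  | succ : Val → Val
  | lam : ℕ → Tm → Val
  | letrec : ℕ → Val → Val
inductive Tm : Type
  | val : Val → Tm
  | app : Val → Val → Tm
  | letin : ℕ → Tm → Tm → Tm
  | choice : ℝ≥0∞ → Tm → Tm → Tm
  | case : Val → Val → Val → Tm
end

/-- Numerals `S^n 0`. -/
def natVal : ℕ → Val
  | 0 => .zero
  | n + 1 => .succ (natVal n)

mutual
/-- Free variables of a value. -/
def Val.fv : Val → Finset ℕ
  | .var x => {x}
  | .zero => ∅
  | .succ v => Val.fv v
  | .lam x M => (Tm.fv M).erase x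
  | .letrec f v => (Val.fv v).erase f
/-- Free variables of a term. -/
def Tm.fv : Tm → Finset ℕ
  | .val v => Val.fv v
  | .app v w => Val.fv v ∪ Val.fv w
  | .letin x M N => Tm.fv M ∪ (Tm.fv N).erase x
  | .choice _ M N => Tm.fv M ∪ Tm.fv N
  | .case v w z => Val.fv v ∪ Val.fv w ∪ Val.fv z
end

mutual
/-- Well-formedness of a value: all probabilities in choices lie in (0,1). -/
def Val.WFp : Val → Prop
  | .var _ => True
  | .zero => True
  | .succ v => Val.WFp v
  | .lam _ M => Tm.WFp M
  | .letrec _ v => Val.WFp v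
/-- Well-formedness of a term: all probabilities in choices lie in (0,1). -/
def Tm.WFp : Tm → Prop
  | .val v => Val.WFp v
  | .app v w => Val.WFp v ∧ Val.WFp w
  | .letin _ M N => Tm.WFp M ∧ Tm.WFp N
  | .choice p M N => 0 < p ∧ p < 1 ∧ Tm.WFp M ∧ Tm.WFp N
  | .case v w z => Val.WFp v ∧ Val.WFp w ∧ Val.WFp z
end

mutual
/-- Parallel (capture-naive) substitution of values for variables in a value;
intended to be used with closed substituted values only. -/
def Val.psubst : (ℕ → Option Val) → Val → Val
  | ς, .var y => (ς y).getD (.var y)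
  | _, .zero => .zero
  | ς, .succ v => .succ (Val.psubst ς v)
  | ς, .lam y M => .lam y (Tm.psubst (fun z => if z = y then none else ς z) M)
  | ς, .letrec g v => .letrec g (Val.psubst (fun z => if z = g then none else ς z) v)
/-- Parallel substitution in a term. -/
def Tm.psubst : (ℕ → Option Val) → Tm → Tm
  | ς, .val v => .val (Val.psubst ς v)
  | ς, .app v w => .app (Val.psubst ς v) (Val.psubst ς w)
  | ς, .letin y M N =>
      .letin y (Tm.psubst ς M) (Tm.psubst (fun z => if z = y then none else ς z) N)
  | ς, .choice p M N => .choice p (Tm.psubst ς M) (Tm.psubst ς N)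
  | ς, .case v w z => .case (Val.psubst ς v) (Val.psubst ς w) (Val.psubst ς z)
end

/-- Substitution of a single value in a value. -/
def Val.subst1 (x : ℕ) (U : Val) (v : Val) : Val :=
  Val.psubst (fun z => if z = x then some U else none) v

/-- Substitution of a single value in a term. -/
def Tm.subst1 (x : ℕ) (U : Val) (M : Tm) : Tm :=
  Tm.psubst (fun z => if z = x then some U else none) M

/-! ### Distributions -/

/-- (Sub)distributions over `X`. -/
abbrev Distr (X : Type) := X → ℝ≥0∞

/-- The sum `|D|` of a distribution. -/
def Distr.mass {X : Type} (D : Distr X) : ℝ≥0∞ := ∑' x, D x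

open Classical in
/-- The Dirac distribution. -/
def Distr.dirac {X : Type} (a : X) : Distr X := fun b => if b = a then 1 else 0

open Classical in
/-- Pushforward of a distribution. -/
def Distr.map {X Y : Type} (f : X → Y) (D : Distr X) : Distr Y :=
  fun y => ∑' x, if f x = y then D x else 0

/-- Finite distributions. -/
def Distr.FinSupp {X : Type} (D : Distr X) : Prop := {x | D x ≠ 0}.Finite

open Classical in
/-- `[V i ^ pr i | i]` is a (finite) pseudo-representation of `D`. -/
def PseudoRep {X : Type} (D : Distr X) {n : ℕ} (V : Fin n → X) (pr : Fin n → ℝ≥0∞) : Prop :=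
  (∀ i, 0 < D (V i)) ∧ ∀ x, D x = ∑ i, if V i = x then pr i else 0

open Classical in
/-- `[V j ^ pr j | j ∈ J]` is a pseudo-representation of `D` (general countable index). -/
def PseudoRep' {X : Type} (D : Distr X) {J : Type} [Countable J] (V : J → X)
    (pr : J → ℝ≥0∞) : Prop :=
  (∀ j, 0 < D (V j)) ∧ ∀ x, D x = ∑' j, if V j = x then pr j else 0

/-! ### Call-by-value operational semantics -/

open Classical in
/-- One step of call-by-value reduction, as a function from terms to distributions of terms.
Values (and stuck terms) reduce to themselves. -/
def stepFn : Tm → Distr Tm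
  | .val v => Distr.dirac (.val v)
  | .app (.lam x M) w => Distr.dirac (Tm.subst1 x w M)
  | .app (.letrec f v) w =>
      if w = Val.zero ∨ ∃ w', w = Val.succ w' then
        Distr.dirac (.app (Val.subst1 f (.letrec f v) v) w)
      else Distr.dirac (.app (.letrec f v) w)
  | .app v w => Distr.dirac (.app v w)
  | .letin x (.val v) N => Distr.dirac (Tm.subst1 x v N)
  | .letin x M N => Distr.map (fun K => Tm.letin x K N) (stepFn M)
  | .choice p M N => fun L => (if L = M then p else 0) + (if L = N then 1 - p else 0)
  | .case (.succ v) w _ => Distr.dirac (.app w v)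
  | .case .zero _ z => Distr.dirac (.val z)
  | .case v w z => Distr.dirac (.case v w z)

/-- One step of reduction `→ᵥ` on distributions of terms. -/
def stepD (D : Distr Tm) : Distr Tm := fun N => ∑' M, D M * stepFn M N

/-- The distribution obtained from `{M¹}` after `n` steps of `→ᵥ`. -/
def approxT (M : Tm) (n : ℕ) : Distr Tm := stepD^[n] (Distr.dirac M)

/-- `M ⇒ᵥⁿ approxV M n` : restriction to values of the `n`-step reduct of `{M¹}`. -/
def approxV (M : Tm) (n : ℕ) : Distr Val := fun v => approxT M n (.val v)

/-- The semantics `⟦M⟧` of a term: the lub of its value approximants. -/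
def sem (M : Tm) : Distr Val := fun v => ⨆ n, approxV M n v

/-- Almost-sure termination. -/
def Tm.AST (M : Tm) : Prop := Distr.mass (sem M) = 1

/-! ### Affine simple types -/

inductive SimpleTy : Type
  | nat : SimpleTy
  | arrow : SimpleTy → SimpleTy → SimpleTy
deriving DecidableEq

/-- Simple-type contexts. -/
abbrev SCtx := ℕ → Option SimpleTy

def SCtx.empty : SCtx := fun _ => none

def SCtx.ext (Γ : SCtx) (x : ℕ) (κ : SimpleTy) : SCtx := fun z => if z = x then some κ else Γ z

/-- Affine contraction `Γ ⊎ Δ = Ω` : shared variables must have type `Nat`. -/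
def AffUnion (Γ Δ Ω : SCtx) : Prop := ∀ x,
  match Γ x, Δ x with
  | some κ, some κ' => κ = SimpleTy.nat ∧ κ' = SimpleTy.nat ∧ Ω x = some SimpleTy.nat
  | some κ, none => Ω x = some κ
  | none, some κ' => Ω x = some κ'
  | none, none => Ω x = none

/-- Non-affine contraction `Γ ∪ Δ = Ω` : shared variables must have the same type. -/
def ChUnion (Γ Δ Ω : SCtx) : Prop := ∀ x,
  match Γ x, Δ x with
  | some κ, some κ' => κ = κ' ∧ Ω x = some κ
  | some κ, none => Ω x = some κ
  | none, some κ' => Ω x = some κ'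
  | none, none => Ω x = none

mutual
/-- Affine simple typing of values (Figure 1). -/
inductive SimpTyV : SCtx → Val → SimpleTy → Prop
  | var {Γ : SCtx} {x κ} : Γ x = some κ → SimpTyV Γ (.var x) κ
  | zero {Γ : SCtx} : SimpTyV Γ .zero .nat
  | succ {Γ : SCtx} {v} : SimpTyV Γ v .nat → SimpTyV Γ (.succ v) .nat
  | lam {Γ : SCtx} {x M κ κ'} :
      SimpTyT (SCtx.ext Γ x κ) M κ' → SimpTyV Γ (.lam x M) (.arrow κ κ')
  | letrec {Γ : SCtx} {f v κ} :
      (∀ y κ'', Γ y = some κ'' → κ'' = SimpleTy.nat) →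
      SimpTyV (SCtx.ext Γ f (.arrow .nat κ)) v (.arrow .nat κ) →
      SimpTyV Γ (.letrec f v) (.arrow .nat κ)
/-- Affine simple typing of terms (Figure 1). -/
inductive SimpTyT : SCtx → Tm → SimpleTy → Prop
  | val {Γ : SCtx} {v κ} : SimpTyV Γ v κ → SimpTyT Γ (.val v) κ
  | app {Γ Δ Ω : SCtx} {v w κ κ'} :
      AffUnion Γ Δ Ω → SimpTyV Γ v (.arrow κ κ') → SimpTyV Δ w κ →
      SimpTyT Ω (.app v w) κ'
  | letin {Γ Δ Ω : SCtx} {x M N κ κ'} :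
      AffUnion Γ Δ Ω → SimpTyT Γ M κ → SimpTyT (SCtx.ext Δ x κ) N κ' →
      SimpTyT Ω (.letin x M N) κ'
  | choice {Γ Δ Ω : SCtx} {p M N κ} :
      ChUnion Γ Δ Ω → SimpTyT Γ M κ → SimpTyT Δ N κ →
      SimpTyT Ω (.choice p M N) κ
  | case {Γ Δ Ω : SCtx} {v w z κ} :
      AffUnion Γ Δ Ω → SimpTyV Γ v .nat → SimpTyV Δ w (.arrow .nat κ) →
      SimpTyV Δ z κ → SimpTyT Ω (.case v w z) κ
end

/-! ### Sizes -/

inductive Size : Type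
  | var : ℕ → Size
  | inf : Size
  | succ : Size → Size
deriving DecidableEq

/-- Size environments. -/
abbrev SEnv := ℕ → ℕ∞

/-- Interpretation `⟦s⟧_ρ` of a size. -/
def Size.interp (ρ : SEnv) : Size → ℕ∞
  | .var i => ρ i
  | .inf => ⊤
  | .succ s => Size.interp ρ s + 1

/-- The spine variable of a size, if any. -/
def Size.spine : Size → Option ℕ
  | .var i => some i
  | .inf => none
  | .succ s => Size.spine s

/-- Substitution of a size for a size variable. -/
def Size.subst (i : ℕ) (r : Size) : Size → Size
  | .var j => if j = i then r else .var j
  | .inf => .inf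
  | .succ s => .succ (Size.subst i r s)

/-- Iterated successor `succ^k s`. -/
def Size.iter : ℕ → Size → Size
  | 0, s => s
  | k + 1, s => .succ (Size.iter k s)

/-- Occurrence of a size variable in a size. -/
def Size.hasVar (i : ℕ) : Size → Prop
  | .var j => j = i
  | .inf => False
  | .succ s => Size.hasVar i s

/-- The order `≼` on sizes. -/
inductive SizeLE : Size → Size → Prop
  | refl (s) : SizeLE s s
  | trans {s r t} : SizeLE s r → SizeLE r t → SizeLE s t
  | succ (s) : SizeLE s (.succ s)
  | inf (s) : SizeLE s .inf

/-! ### Sized types and distribution types -/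

mutual
/-- Sized types. -/
inductive STy : Type
  | nat : Size → STy
  | arrow : STy → DTy → STy
/-- Distribution types, as finite nonempty formal lists of weighted sized types. -/
inductive DTy : Type
  | single : STy → ℝ≥0∞ → DTy
  | cons : STy → ℝ≥0∞ → DTy → DTy
end

mutual
/-- Underlying simple type of a sized type. -/
def STy.erase : STy → SimpleTy
  | .nat _ => .nat
  | .arrow σ μ => .arrow (STy.erase σ) (DTy.eraseU μ)
/-- Underlying simple type of a distribution type. -/
def DTy.eraseU : DTy → SimpleTy
  | .single σ _ => STy.erase σ
  | .cons σ _ _ => STy.erase σ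
end

/-- The list of entries of a distribution type. -/
def DTy.toList : DTy → List (STy × ℝ≥0∞)
  | .single σ p => [(σ, p)]
  | .cons σ p μ => (σ, p) :: DTy.toList μ

open Classical in
/-- The probability `μ(τ)` assigned by a distribution type to a sized type. -/
def DTy.prob : DTy → STy → ℝ≥0∞
  | .single σ p, τ => if σ = τ then p else 0
  | .cons σ p μ, τ => (if σ = τ then p else 0) + DTy.prob μ τ

/-- The sum `|μ|` of a distribution type. -/
def DTy.mass : DTy → ℝ≥0∞
  | .single _ p => p
  | .cons _ p μ => p + DTy.mass μ

/-- Well-formedness of distribution types: sum at most one, uniform underlying type. -/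
def DTy.WF (μ : DTy) : Prop :=
  DTy.mass μ ≤ 1 ∧ ∀ e ∈ DTy.toList μ, STy.erase e.1 = DTy.eraseU μ

mutual
/-- Size substitution in a sized type. -/
def STy.substSize (i : ℕ) (s : Size) : STy → STy
  | .nat r => .nat (Size.subst i s r)
  | .arrow σ μ => .arrow (STy.substSize i s σ) (DTy.substSize i s μ)
/-- Size substitution in a distribution type. -/
def DTy.substSize (i : ℕ) (s : Size) : DTy → DTy
  | .single σ p => .single (STy.substSize i s σ) p
  | .cons σ p μ => .cons (STy.substSize i s σ) p (DTy.substSize i s μ)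
end

mutual
/-- Occurrence of a size variable in a sized type. -/
def STy.hasVar (i : ℕ) : STy → Prop
  | .nat s => Size.hasVar i s
  | .arrow σ μ => STy.hasVar i σ ∨ DTy.hasVar i μ
/-- Occurrence of a size variable in a distribution type. -/
def DTy.hasVar (i : ℕ) : DTy → Prop
  | .single σ _ => STy.hasVar i σ
  | .cons σ _ μ => STy.hasVar i σ ∨ DTy.hasVar i μ
end

mutual
/-- Positive occurrences of a size variable in a sized type. -/
inductive PosS : ℕ → STy → Prop
  | nat (i s) : PosS i (.nat s)
  | arrow {i σ μ} : NegS i σ → PosD i μ → PosS i (.arrow σ μ)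
/-- Negative occurrences of a size variable in a sized type. -/
inductive NegS : ℕ → STy → Prop
  | nat {i s} : ¬ Size.hasVar i s → NegS i (.nat s)
  | arrow {i σ μ} : PosS i σ → NegD i μ → NegS i (.arrow σ μ)
/-- Positivity for distribution types. -/
inductive PosD : ℕ → DTy → Prop
  | single {i σ p} : PosS i σ → PosD i (.single σ p)
  | cons {i σ p μ} : PosS i σ → PosD i μ → PosD i (.cons σ p μ)
/-- Negativity for distribution types. -/
inductive NegD : ℕ → DTy → Prop
  | single {i σ p} : NegS i σ → NegD i (.single σ p)
  | cons {i σ p μ} : NegS i σ → NegD i μ → NegD i (.cons σ p μ)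
end

open Classical in
mutual
/-- Subtyping of sized types. -/
inductive SubS : STy → STy → Prop
  | refl (σ) : SubS σ σ
  | nat {s r} : SizeLE s r → SubS (.nat s) (.nat r)
  | arrow {σ τ μ ν} : SubS τ σ → SubD μ ν → SubS (.arrow σ μ) (.arrow τ ν)
/-- Subtyping of distribution types. -/
inductive SubD : DTy → DTy → Prop
  | intro (μ ν : DTy) (f : Fin (DTy.toList μ).length → Fin (DTy.toList ν).length) :
      (∀ a, SubS ((DTy.toList μ).get a).1 ((DTy.toList ν).get (f a)).1) →
      (∀ b, (∑ a, if f a = b then ((DTy.toList μ).get a).2 else 0) ≤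
          ((DTy.toList ν).get b).2) →
      SubD μ ν
end

/-- Pointwise order `≼` on distribution types (as distributions of sized types). -/
def DTy.le (μ ν : DTy) : Prop := ∀ τ, DTy.prob μ τ ≤ DTy.prob ν τ

/-- The Dirac distribution type `{σ¹}`. -/
def DTy.diracAt (σ : STy) : DTy := .single σ 1

/-- A distribution type is Dirac if it denotes a Dirac distribution of types. -/
def DTy.IsDirac (μ : DTy) : Prop := ∃ σ, ∀ τ, DTy.prob μ τ = DTy.prob (DTy.diracAt σ) τ

/-- Scaling of a distribution type. -/
def DTy.scale (c : ℝ≥0∞) : DTy → DTy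
  | .single σ p => .single σ (c * p)
  | .cons σ p μ => .cons σ (c * p) (DTy.scale c μ)

/-- Concatenation of distribution types. -/
def DTy.append : DTy → DTy → DTy
  | .single σ p, ν => .cons σ p ν
  | .cons σ p μ, ν => .cons σ p (DTy.append μ ν)

/-- Probabilistic sum `μ ⊕ₚ ν = p·μ + (1-p)·ν` of distribution types. -/
def DTy.mix (p : ℝ≥0∞) (μ ν : DTy) : DTy := DTy.append (DTy.scale p μ) (DTy.scale (1 - p) ν)

/-! ### Sized walks -/

/-- Probabilities of convergence in finite time of the sized walk with jump distribution `g`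
(`g k` = probability to move from `m+1` to `m+k`): `Pr g n m` is the probability to reach `0`
from `m` in at most `n` steps. -/
def Pr (g : ℕ → ℝ≥0∞) : ℕ → ℕ → ℝ≥0∞
  | 0, m => if m = 0 then 1 else 0
  | n + 1, m =>
      if m = 0 then 1
      else (∑' k, g k * Pr g n (m - 1 + k)) + (1 - ∑' k, g k)

/-- A sized walk is almost surely terminating. -/
def WalkAST (g : ℕ → ℝ≥0∞) : Prop := ∀ m, (⨆ n, Pr g n m) = 1

/-- The jump distribution of the sized walk induced by the data `(k_j, p_j)_j`. -/
def inducedWalk (J : List (ℕ × ℝ≥0∞)) : ℕ → ℝ≥0∞ :=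
  fun k => (J.map (fun e => if e.1 = k then e.2 else 0)).sum

/-! ### Monadic affine sized typing (Figure 2) -/

/-- Sized contexts. -/
abbrev SzCtx := ℕ → Option STy

def SzCtx.empty : SzCtx := fun _ => none

def SzCtx.dom (Γ : SzCtx) : Set ℕ := {x | Γ x ≠ none}

def SzCtx.ext (Γ : SzCtx) (x : ℕ) (σ : STy) : SzCtx := fun z => if z = x then some σ else Γ z

def SzCtx.union (Γ Δ : SzCtx) : SzCtx := fun x => (Γ x).orElse (fun _ => Δ x)

/-- Disjointness of sized contexts. -/
def SzDisj (Γ Δ : SzCtx) : Prop := ∀ x, Γ x = none ∨ Δ x = none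

/-- A sized context whose types all refine `Nat`. -/
def SzCtx.natOnly (Γ : SzCtx) : Prop := ∀ x σ, Γ x = some σ → STy.erase σ = SimpleTy.nat

/-- Distribution contexts: at most one variable with a distribution type. -/
abbrev DCtx := Option (ℕ × DTy)

/-- Disjoint join `Θ, Ψ = Ω` of distribution contexts. -/
def DJoin (Θ Ψ Ω : DCtx) : Prop := (Θ = none ∧ Ω = Ψ) ∨ (Ψ = none ∧ Ω = Θ)

/-- Probabilistic sum `Θ ⊕ₚ Ψ = Ω` of distribution contexts. -/
def DChoiceJoin (p : ℝ≥0∞) : DCtx → DCtx → DCtx → Prop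
  | none, none, Ω => Ω = none
  | some (x, μ), none, Ω => Ω = some (x, DTy.scale p μ)
  | none, some (y, ν), Ω => Ω = some (y, DTy.scale (1 - p) ν)
  | some (x, μ), some (y, ν), Ω =>
      x = y ∧ DTy.eraseU μ = DTy.eraseU ν ∧ Ω = some (x, DTy.mix p μ ν)

/-- Weighted sum `∑ᵢ prᵢ · Ψᵢ = Ω` of distribution contexts. -/
def DWeightedSum {n : ℕ} (pr : Fin n → ℝ≥0∞) (Ψ : Fin n → DCtx) (Ω : DCtx) : Prop :=
  ((∀ a, Ψ a = none) ∧ Ω = none) ∨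
  (∃ (y : ℕ) (ν : Fin n → DTy),
    (∀ a, Ψ a = some (y, ν a)) ∧
    (∀ a b, DTy.eraseU (ν a) = DTy.eraseU (ν b)) ∧
    (∑ a, pr a) ≤ 1 ∧
    ∃ ξ : DTy, Ω = some (y, ξ) ∧ ∀ τ, DTy.prob ξ τ = ∑ a, pr a * DTy.prob (ν a) τ)

mutual
/-- Monadic affine sized typing of values (Figure 2). -/
inductive MTyV : SzCtx → DCtx → Val → STy → Prop
  | var {Γ : SzCtx} {Θ x σ} : Γ x = some σ → MTyV Γ Θ (.var x) σ
  | var' {Γ : SzCtx} {x σ} : MTyV Γ (some (x, DTy.diracAt σ)) (.var x) σ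
  | zero {Γ : SzCtx} {Θ s} : MTyV Γ Θ .zero (.nat (.succ s))
  | succ {Γ : SzCtx} {Θ v s} : MTyV Γ Θ v (.nat s) → MTyV Γ Θ (.succ v) (.nat (.succ s))
  | lam {Γ : SzCtx} {Θ x M σ μ} :
      MTyT (SzCtx.ext Γ x σ) Θ M μ → MTyV Γ Θ (.lam x M) (.arrow σ μ)
  | sub {Γ : SzCtx} {Θ v σ τ} : MTyV Γ Θ v σ → SubS σ τ → MTyV Γ Θ v τ
  | letrec {Γ Δ : SzCtx} {Θ f v} {i : ℕ} {ν : DTy} {J : List (ℕ × ℝ≥0∞)} {μ : DTy} {r : Size} :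
      SzCtx.natOnly Γ → SzDisj Γ Δ → Γ f = none →
      (∀ x σ, Γ x = some σ → ¬ STy.hasVar i σ) →
      PosD i ν →
      DTy.toList μ = J.map (fun e =>
        (STy.arrow (.nat (Size.iter e.1 (.var i)))
          (DTy.substSize i (Size.iter e.1 (.var i)) ν), e.2)) →
      WalkAST (inducedWalk J) →
      MTyV Γ (some (f, μ)) v
        (.arrow (.nat (.succ (.var i))) (DTy.substSize i (.succ (.var i)) ν)) →
      MTyV (SzCtx.union Γ Δ) Θ (.letrec f v) (.arrow (.nat r) (DTy.substSize i r ν))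
/-- Monadic affine sized typing of terms (Figure 2). -/
inductive MTyT : SzCtx → DCtx → Tm → DTy → Prop
  | val {Γ : SzCtx} {Θ v σ} : MTyV Γ Θ v σ → MTyT Γ Θ (.val v) (DTy.diracAt σ)
  | sub {Γ : SzCtx} {Θ M μ ν} : MTyT Γ Θ M μ → SubD μ ν → MTyT Γ Θ M ν
  | app {Γ Δ Ξ : SzCtx} {Θ Ψ Ω : DCtx} {v w σ μ} :
      SzCtx.natOnly Γ → SzDisj Γ Δ → SzDisj Γ Ξ → SzDisj Δ Ξ →
      DJoin Θ Ψ Ω →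
      MTyV (SzCtx.union Γ Δ) Θ v (.arrow σ μ) →
      MTyV (SzCtx.union Γ Ξ) Ψ w σ →
      MTyT (SzCtx.union Γ (SzCtx.union Δ Ξ)) Ω (.app v w) μ
  | choice {Γ : SzCtx} {Θ Ψ Ω : DCtx} {p M N μ ν} :
      0 < p → p < 1 → DTy.eraseU μ = DTy.eraseU ν →
      DChoiceJoin p Θ Ψ Ω →
      MTyT Γ Θ M μ → MTyT Γ Ψ N ν →
      MTyT Γ Ω (.choice p M N) (DTy.mix p μ ν)
  | letin {Γ Δ Ξ : SzCtx} {Θ : DCtx} {x M N} {μ : DTy}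
      {νf : Fin (DTy.toList μ).length → DTy}
      {Ψ : Fin (DTy.toList μ).length → DCtx} {Ω₀ Ω : DCtx} {ξ : DTy} :
      SzCtx.natOnly Γ → SzDisj Γ Δ → SzDisj Γ Ξ → SzDisj Δ Ξ →
      MTyT (SzCtx.union Γ Δ) Θ M μ →
      (∀ a, MTyT (SzCtx.ext (SzCtx.union Γ Ξ) x ((DTy.toList μ).get a).1) (Ψ a) N (νf a)) →
      DWeightedSum (fun a => ((DTy.toList μ).get a).2) Ψ Ω₀ →
      DJoin Θ Ω₀ Ω →
      (∀ τ, DTy.prob ξ τ = ∑ a, ((DTy.toList μ).get a).2 * DTy.prob (νf a) τ) →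
      MTyT (SzCtx.union Γ (SzCtx.union Δ Ξ)) Ω (.letin x M N) ξ
  | case {Γ Δ : SzCtx} {Θ : DCtx} {v w z s μ} :
      SzDisj Γ Δ →
      MTyV Γ none v (.nat (.succ s)) →
      MTyV Δ Θ w (.arrow (.nat s) μ) →
      MTyT Δ Θ (.val z) μ →
      MTyT (SzCtx.union Γ Δ) Θ (.case v w z) μ
end

/-! ### Reducibility sets -/

/-- Builder `DRed` from a family of value reducibility sets. -/
def mkDRed (vred : STy → ℝ≥0∞ → Set Val) (μ : DTy) (p : ℝ≥0∞) : Set (Distr Val) :=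
  { D | Distr.FinSupp D ∧
    ∃ (n : ℕ) (V : Fin n → Val) (pr : Fin n → ℝ≥0∞),
      PseudoRep D V pr ∧
      ∃ pm qm : Fin n → Fin (DTy.toList μ).length → ℝ≥0∞,
        (∀ a b, pm a b ≤ 1) ∧ (∀ a b, qm a b ≤ 1) ∧
        (∀ a b, V a ∈ vred ((DTy.toList μ).get b).1 (qm a b)) ∧
        (∀ a, (∑ b, pm a b) = pr a) ∧
        (∀ b, (∑ a, pm a b) = ((DTy.toList μ).get b).2) ∧
        p ≤ ∑ a, ∑ b, qm a b * pm a b }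

/-- Builder `TRed` from a family of value reducibility sets. -/
def mkTRed (κ : SimpleTy) (vred : STy → ℝ≥0∞ → Set Val) (μ : DTy) (p : ℝ≥0∞) : Set Tm :=
  { M | SimpTyT SCtx.empty M κ ∧
    ∀ r < p, ∃ ν : DTy, DTy.le ν μ ∧ (∀ e ∈ DTy.toList ν, STy.erase e.1 = κ) ∧
      ∃ n : ℕ, approxV M n ∈ mkDRed vred ν r }

/-- The reducibility sets of values, by induction on the underlying simple type. -/
def VRed : SimpleTy → STy → SEnv → ℝ≥0∞ → Set Val
  | .nat, .nat s, ρ, p =>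
      { v | ∃ n : ℕ, v = natVal n ∧ (0 < p → (n : ℕ∞) < Size.interp ρ s) }
  | .nat, _, _, _ => ∅
  | .arrow κ κ', .arrow σ' μ, ρ, p =>
      { v | SimpTyV SCtx.empty v (.arrow κ κ') ∧
        ∀ q : ℝ≥0∞, 0 < q → q ≤ 1 → ∀ w ∈ VRed κ σ' ρ q,
          Tm.app v w ∈ mkTRed κ' (fun τ r => VRed κ' τ ρ r) μ (p * q) }
  | .arrow _ _, _, _, _ => ∅

/-- `VRed^p_{σ,ρ}`. -/
def VRedS (σ : STy) (ρ : SEnv) (p : ℝ≥0∞) : Set Val := VRed (STy.erase σ) σ ρ p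

/-- `DRed^p_{μ,ρ}`. -/
def DRedS (μ : DTy) (ρ : SEnv) (p : ℝ≥0∞) : Set (Distr Val) :=
  mkDRed (fun τ r => VRed (DTy.eraseU μ) τ ρ r) μ p

/-- `TRed^p_{μ,ρ}`. -/
def TRedS (μ : DTy) (ρ : SEnv) (p : ℝ≥0∞) : Set Tm :=
  mkTRed (DTy.eraseU μ) (fun τ r => VRed (DTy.eraseU μ) τ ρ r) μ p

/-! ### Open reducibility sets -/

/-- Product of the degrees over the domain of a (finite-domain) sized context. -/
def ctxProd (Γ : SzCtx) (q : ℕ → ℝ≥0∞) : ℝ≥0∞ := ∏ᶠ x ∈ SzCtx.dom Γ, q x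

/-- `TRed^{Γ|Θ}_{μ,ρ}` : reducibility for open terms. -/
def TRedOpen (Γ : SzCtx) (Θ : DCtx) (μ : DTy) (ρ : SEnv) : Set Tm :=
  match Θ with
  | none =>
    { M | ∀ (q : ℕ → ℝ≥0∞) (v : ℕ → Val),
        (∀ x, q x ≤ 1) →
        (∀ x σ, Γ x = some σ → v x ∈ VRedS σ ρ (q x)) →
        Tm.psubst (fun z => (Γ z).map (fun _ => v z)) M ∈ TRedS μ ρ (ctxProd Γ q) }
  | some (y, τd) =>
    { M | ∀ (q : ℕ → ℝ≥0∞) (v : ℕ → Val)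
        (q' : Fin (DTy.toList τd).length → ℝ≥0∞) (W : Val),
        (∀ x, q x ≤ 1) →
        (∀ x σ, Γ x = some σ → v x ∈ VRedS σ ρ (q x)) →
        (∀ b, q' b ≤ 1) →
        (∀ b, W ∈ VRedS ((DTy.toList τd).get b).1 ρ (q' b)) →
        Tm.psubst (fun z => if z = y then some W else (Γ z).map (fun _ => v z)) M
          ∈ TRedS μ ρ (ctxProd Γ q *
              ((∑ b, ((DTy.toList τd).get b).2 * q' b) +
                (1 - ∑ b, ((DTy.toList τd).get b).2))) }

/-- `VRed^{Γ|Θ}_{σ,ρ}` : reducibility for open values. -/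
def VRedOpen (Γ : SzCtx) (Θ : DCtx) (σ : STy) (ρ : SEnv) : Set Val :=
  match Θ with
  | none =>
    { V | ∀ (q : ℕ → ℝ≥0∞) (v : ℕ → Val),
        (∀ x, q x ≤ 1) →
        (∀ x τ, Γ x = some τ → v x ∈ VRedS τ ρ (q x)) →
        Val.psubst (fun z => (Γ z).map (fun _ => v z)) V ∈ VRedS σ ρ (ctxProd Γ q) }
  | some (y, τd) =>
    { V | ∀ (q : ℕ → ℝ≥0∞) (v : ℕ → Val)
        (q' : Fin (DTy.toList τd).length → ℝ≥0∞) (W : Val),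
        (∀ x, q x ≤ 1) →
        (∀ x τ, Γ x = some τ → v x ∈ VRedS τ ρ (q x)) →
        (∀ b, q' b ≤ 1) →
        (∀ b, W ∈ VRedS ((DTy.toList τd).get b).1 ρ (q' b)) →
        Val.psubst (fun z => if z = y then some W else (Γ z).map (fun _ => v z)) V
          ∈ VRedS σ ρ (ctxProd Γ q *
              ((∑ b, ((DTy.toList τd).get b).2 * q' b) +
                (1 - ∑ b, ((DTy.toList τd).get b).2))) }

/-- `n`-unfolding of `letrec f = W`. -/
def unfold : ℕ → ℕ → Val → Val
  | 0, f, W => .letrec f W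
  | n + 1, f, W => Val.subst1 f (unfold n f W) W

end

theorem interp_subst (i : ℕ) (s : Size) (ρ : SEnv) : ∀ r : Size,
    Size.interp ρ (Size.subst i s r)
      = Size.interp (Function.update ρ i (Size.interp ρ s)) r
  | .var j => by
      simp only [Size.subst, Function.update_apply]
      split
      · subst ‹j = i›; simp [Size.interp]
      · next h => show ρ j = Function.update ρ i (Size.interp ρ s) j; rw [Function.update_of_ne h]
  | .inf => rfl
  | .succ r => by simp [Size.subst, Size.interp, interp_subst i s ρ r]

mutual
theorem erase_substS (i : ℕ) (s : Size) : ∀ σ : STy,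
    STy.erase (STy.substSize i s σ) = STy.erase σ
  | .nat _ => rfl
  | .arrow σ μ => by
      simp [STy.substSize, STy.erase, erase_substS i s σ, erase_substD i s μ]
theorem erase_substD (i : ℕ) (s : Size) : ∀ μ : DTy,
    DTy.eraseU (DTy.substSize i s μ) = DTy.eraseU μ
  | .single σ _ => erase_substS i s σ
  | .cons σ _ _ => erase_substS i s σ
end

theorem toList_substSize (i : ℕ) (s : Size) : ∀ μ : DTy,
    DTy.toList (DTy.substSize i s μ)
      = (DTy.toList μ).map (fun e => (STy.substSize i s e.1, e.2))
  | .single _ _ => rfl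
  | .cons σ p μ => by
      simp [DTy.substSize, DTy.toList, toList_substSize i s μ]

open Classical in
theorem prob_eq_sum : ∀ (μ : DTy) (t : STy),
    DTy.prob μ t = ∑ k : Fin (DTy.toList μ).length,
      if ((DTy.toList μ).get k).1 = t then ((DTy.toList μ).get k).2 else 0
  | .single σ p, t => by
      show _ = ∑ k : Fin 1, _
      rw [Fin.sum_univ_one]; rfl
  | .cons σ p μ, t => by
      show _ = ∑ k : Fin ((DTy.toList μ).length + 1), _
      rw [Fin.sum_univ_succ]
      simp [DTy.prob, DTy.toList, prob_eq_sum μ t]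
      rfl

open Classical in
theorem DTy.le_substSize (i : ℕ) (s : Size) {ν μ : DTy} (h : DTy.le ν μ) :
    DTy.le (DTy.substSize i s ν) (DTy.substSize i s μ) := by
  intro t
  classical
  set T : Finset STy :=
    (((DTy.toList ν).map Prod.fst ++ (DTy.toList μ).map Prod.fst).toFinset).filter
      (fun σ => STy.substSize i s σ = t) with hT
  have key : ∀ (ξ : DTy), (∀ e ∈ DTy.toList ξ, e.1 ∈ ((DTy.toList ν).map Prod.fst ++ (DTy.toList μ).map Prod.fst).toFinset) →
      DTy.prob (DTy.substSize i s ξ) t = ∑ σ ∈ T, DTy.prob ξ σ := by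
    intro ξ hmem
    have h1 : DTy.prob (DTy.substSize i s ξ) t
        = ∑ k : Fin (DTy.toList ξ).length,
            if STy.substSize i s ((DTy.toList ξ).get k).1 = t
            then ((DTy.toList ξ).get k).2 else 0 := by
      rw [prob_eq_sum]
      have hl : (DTy.toList (DTy.substSize i s ξ)).length = (DTy.toList ξ).length := by
        rw [toList_substSize]; simp
      rw [Fintype.sum_equiv (finCongr hl)]
      intro k
      congr 1 <;>
        simp [toList_substSize, List.getElem_map, List.get_eq_getElem]
    rw [h1]
    have h2 : ∀ σ ∈ T, DTy.prob ξ σ = ∑ k : Fin (DTy.toList ξ).length,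
        if ((DTy.toList ξ).get k).1 = σ then ((DTy.toList ξ).get k).2 else 0 :=
      fun σ _ => prob_eq_sum ξ σ
    rw [Finset.sum_congr rfl h2, Finset.sum_comm]
    apply Finset.sum_congr rfl
    intro k _
    rw [Finset.sum_ite_eq T ((DTy.toList ξ).get k).1 (fun _ => ((DTy.toList ξ).get k).2)]
    have : ((DTy.toList ξ).get k).1 ∈ T ↔ STy.substSize i s ((DTy.toList ξ).get k).1 = t := by
      simp only [hT, Finset.mem_filter]
      constructor
      · exact fun h => h.2
      · intro h; exact ⟨hmem _ (List.get_mem ξ.toList k), h⟩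
    by_cases hc : STy.substSize i s ((DTy.toList ξ).get k).1 = t
    · rw [if_pos hc, if_pos (this.mpr hc)]
    · rw [if_neg hc, if_neg (fun hm => hc (this.mp hm))]
  rw [key ν (by intro e he; simp; exact Or.inl ⟨e.2, he⟩),
      key μ (by intro e he; simp; exact Or.inr ⟨e.2, he⟩)]
  exact Finset.sum_le_sum (fun σ _ => h σ)

theorem natVal_simpTy (Γ : SCtx) : ∀ n : ℕ, SimpTyV Γ (natVal n) .nat
  | 0 => SimpTyV.zero
  | n + 1 => SimpTyV.succ (natVal_simpTy Γ n)

theorem closed_nat_is_numeral : ∀ V : Val, SimpTyV SCtx.empty V .nat → ∃ n, V = natVal n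
  | .var x, h => by cases h with | var hx => simp [SCtx.empty] at hx
  | .zero, _ => ⟨0, rfl⟩
  | .succ v, h => by
      cases h with
      | succ hv =>
          obtain ⟨n, rfl⟩ := closed_nat_is_numeral v hv
          exact ⟨n + 1, rfl⟩
  | .lam _ _, h => by cases h
  | .letrec _ _, h => by cases h

/-- Lemma A: members of any VRed set are closed simply-typed values. -/
theorem VRed_simpTy : ∀ (κ : SimpleTy) (τ : STy) (ρ : SEnv) (q : ℝ≥0∞) (V : Val),
    V ∈ VRed κ τ ρ q → SimpTyV SCtx.empty V κ
  | .nat, .nat s, ρ, q, V => by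
      rintro ⟨n, rfl, -⟩
      exact natVal_simpTy _ n
  | .nat, .arrow _ _, ρ, q, V => by intro h; exact absurd h (by simp [VRed])
  | .arrow κ κ', .nat _, ρ, q, V => by intro h; exact absurd h (by simp [VRed])
  | .arrow κ κ', .arrow σ μ, ρ, q, V => fun h => h.1

/-- Canonical sized refinement of a simple type. -/
noncomputable def canon : SimpleTy → STy
  | .nat => .nat .inf
  | .arrow κ κ' => .arrow (canon κ) (.single (canon κ') 1)

theorem erase_canon : ∀ κ, STy.erase (canon κ) = κ
  | .nat => rfl
  | .arrow κ κ' => by simp [canon, STy.erase, DTy.eraseU, erase_canon κ, erase_canon κ']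

theorem AffUnion_empty : AffUnion SCtx.empty SCtx.empty SCtx.empty := fun _ => rfl

/-- Lemma B: closed simply-typed values are in `VRed^0` at the canonical refinement. -/
theorem VRed_canon_zero : ∀ (κ : SimpleTy) (V : Val) (ρ : SEnv),
    SimpTyV SCtx.empty V κ → V ∈ VRed κ (canon κ) ρ 0
  | .nat, V, ρ, h => by
      obtain ⟨n, rfl⟩ := closed_nat_is_numeral V h
      exact ⟨n, rfl, by simp [Size.interp]⟩
  | .arrow κ κ', V, ρ, h => by
      simp only [canon, VRed, Set.mem_setOf_eq]
      refine ⟨h, ?_⟩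
      intro q hq hq1 w hw
      simp only [mkTRed, Set.mem_setOf_eq]
      refine ⟨SimpTyT.app AffUnion_empty h (VRed_simpTy κ (canon κ) ρ q w hw), ?_⟩
      intro r hr
      simp at hr

open Classical in
theorem alloc : ∀ (m : ℕ) (c : Fin m → ℝ≥0∞) (S : Fin m → Prop) (q : ℝ≥0∞),
    q ≠ ∞ → (q ≤ ∑ b, if S b then c b else 0) →
    ∃ a : Fin m → ℝ≥0∞, (∀ b, a b ≤ c b) ∧ (∀ b, ¬ S b → a b = 0) ∧ (∑ b, a b) = q
  | 0, c, S, q, hq, h => by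
      refine ⟨fun _ => 0, fun b => b.elim0, fun b => b.elim0, ?_⟩
      simp at h ⊢
      simp [h]
  | m + 1, c, S, q, hq, h => by
      classical
      set c0 : ℝ≥0∞ := if S 0 then min (c 0) q else 0 with hc0
      have hc0q : c0 ≤ q := by
        rw [hc0]; split
        · exact min_le_right _ _
        · exact zero_le
      have hc0c : c0 ≤ c 0 := by
        rw [hc0]; split
        · exact min_le_left _ _
        · exact zero_le
      have hrec : q - c0 ≤ ∑ b : Fin m, if S b.succ then c b.succ else 0 := by
        rw [Fin.sum_univ_succ] at h
        rw [tsub_le_iff_left]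
        by_cases hS : S 0
        · rcases le_total (c 0) q with hle | hle
          · have : c0 = c 0 := by rw [hc0, if_pos hS, min_eq_left hle]
            rw [this]; rwa [if_pos hS] at h
          · have : c0 = q := by rw [hc0, if_pos hS, min_eq_right hle]
            rw [this]; exact le_add_right le_rfl
        · rw [hc0, if_neg hS]; rw [if_neg hS, zero_add] at h; simpa using h
      obtain ⟨a, ha1, ha2, ha3⟩ := alloc m (fun b => c b.succ) (fun b => S b.succ)
        (q - c0) (ne_top_of_le_ne_top hq tsub_le_self) hrec
      refine ⟨Fin.cons c0 a, ?_, ?_, ?_⟩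
      · intro b
        refine Fin.cases ?_ ?_ b
        · simpa using hc0c
        · intro j; simpa using ha1 j
      · intro b
        refine Fin.cases ?_ ?_ b
        · intro hS; simp [hc0, hS]
        · intro j hS; simpa using ha2 j hS
      · rw [Fin.sum_univ_succ]
        simp only [Fin.cons_zero, Fin.cons_succ]
        rw [ha3, add_tsub_cancel_of_le hc0q]

open Classical in
theorem allocAll : ∀ (K : ℕ) (m : ℕ) (τ : Fin K → STy) (q : Fin K → ℝ≥0∞)
    (σ : Fin m → STy) (P : Fin m → ℝ≥0∞),
    (∀ k, q k ≠ ∞) →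
    (∀ t : STy, (∑ k, if τ k = t then q k else 0) ≤ ∑ b, if σ b = t then P b else 0) →
    ∃ A : Fin K → Fin m → ℝ≥0∞,
      (∀ k b, σ b ≠ τ k → A k b = 0) ∧
      (∀ k, (∑ b, A k b) = q k) ∧
      (∀ b, (∑ k, A k b) ≤ P b)
  | 0, m, τ, q, σ, P, hq, h =>
      ⟨fun k => k.elim0, fun k => k.elim0, fun k => k.elim0, fun b => by simp⟩
  | K + 1, m, τ, q, σ, P, hq, h => by
      classical
      have h0 : q 0 ≤ ∑ b, if σ b = τ 0 then P b else 0 := by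
        refine le_trans ?_ (h (τ 0))
        rw [Fin.sum_univ_succ, if_pos rfl]
        exact le_add_right le_rfl
      obtain ⟨a0, ha1, ha2, ha3⟩ := alloc m P (fun b => σ b = τ 0) (q 0) (hq 0) h0
      have hrec : ∀ t : STy, (∑ k : Fin K, if τ k.succ = t then q k.succ else 0)
          ≤ ∑ b, if σ b = t then P b - a0 b else 0 := by
        intro t
        by_cases ht : τ 0 = t
        · subst ht
          have step1 : (∑ b, if σ b = τ 0 then P b else 0)
              ≤ (∑ b, if σ b = τ 0 then P b - a0 b else 0) + q 0 := by
            rw [← ha3, ← Finset.sum_add_distrib]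
            refine Finset.sum_le_sum ?_
            intro b _
            by_cases hb : σ b = τ 0
            · rw [if_pos hb, if_pos hb]; exact le_tsub_add
            · rw [if_neg hb, if_neg hb]; exact zero_le
          have h' := h (τ 0)
          rw [Fin.sum_univ_succ, if_pos rfl, add_comm] at h'
          have := le_trans h' step1
          exact ENNReal.le_of_add_le_add_right (by simpa using hq 0) this
        · have h' := h t
          rw [Fin.sum_univ_succ, if_neg ht, zero_add] at h'
          refine h'.trans (le_of_eq (Finset.sum_congr rfl ?_))
          intro b _
          by_cases hb : σ b = t
          · rw [if_pos hb, if_pos hb, ha2 b (by rw [hb]; exact fun hh => ht hh.symm),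
              tsub_zero]
          · rw [if_neg hb, if_neg hb]
      obtain ⟨A, hA1, hA2, hA3⟩ := allocAll K m (fun k => τ k.succ) (fun k => q k.succ)
        σ (fun b => P b - a0 b) (fun k => hq k.succ) hrec
      refine ⟨Fin.cons a0 A, ?_, ?_, ?_⟩
      · intro k b
        refine Fin.cases ?_ ?_ k
        · intro hne; simpa using ha2 b hne
        · intro j hne; simpa using hA1 j b hne
      · intro k
        refine Fin.cases ?_ ?_ k
        · simpa using ha3
        · intro j; simpa using hA2 j
      · intro b
        rw [Fin.sum_univ_succ]
        simp only [Fin.cons_zero, Fin.cons_succ]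
        calc a0 b + ∑ k : Fin K, A k b ≤ a0 b + (P b - a0 b) :=
              add_le_add le_rfl (hA3 b)
          _ = P b := add_tsub_cancel_of_le (ha1 b)

theorem mkDRed_mono {vred vred' : STy → ℝ≥0∞ → Set Val} {ν ν' : DTy} {r : ℝ≥0∞}
    (hlen : (DTy.toList ν).length = (DTy.toList ν').length)
    (hcol : ∀ c : Fin (DTy.toList ν).length,
      ((DTy.toList ν).get c).2 = ((DTy.toList ν').get (Fin.cast hlen c)).2 ∧
      ∀ p, vred ((DTy.toList ν).get c).1 p
        = vred' ((DTy.toList ν').get (Fin.cast hlen c)).1 p) :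
    mkDRed vred ν r ⊆ mkDRed vred' ν' r := by
  rintro D ⟨hfin, n, V, pr, hrep, pm, qm, h1, h2, h3, h4, h5, h6⟩
  refine ⟨hfin, n, V, pr, hrep,
    fun a c => pm a (Fin.cast hlen.symm c), fun a c => qm a (Fin.cast hlen.symm c),
    fun a c => h1 a _, fun a c => h2 a _, ?_, ?_, ?_, ?_⟩
  · intro a c
    have := h3 a (Fin.cast hlen.symm c)
    rwa [(hcol (Fin.cast hlen.symm c)).2] at this
  · intro a
    rw [← h4 a]
    exact Fintype.sum_equiv (finCongr hlen.symm) _ _ (fun c => rfl)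
  · intro c
    have := h5 (Fin.cast hlen.symm c)
    have e : Fin.cast hlen (Fin.cast hlen.symm c) = c := rfl
    rw [(hcol (Fin.cast hlen.symm c)).1, e] at this
    rw [← this]
  · refine le_trans h6 (le_of_eq ?_)
    refine Finset.sum_congr rfl ?_
    intro a _
    exact Fintype.sum_equiv (finCongr hlen) _ _ (fun c => rfl)

theorem mkDRed_subst (i : ℕ) (s : Size) {vred vred' : STy → ℝ≥0∞ → Set Val} (ν : DTy)
    (hv : ∀ τ p, vred (STy.substSize i s τ) p = vred' τ p) (r : ℝ≥0∞) :
    mkDRed vred (DTy.substSize i s ν) r = mkDRed vred' ν r := by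
  have hlen : (DTy.toList (DTy.substSize i s ν)).length = (DTy.toList ν).length := by
    rw [toList_substSize]; simp
  have hget : ∀ c : Fin (DTy.toList (DTy.substSize i s ν)).length,
      (DTy.toList (DTy.substSize i s ν)).get c
        = (STy.substSize i s ((DTy.toList ν).get (Fin.cast hlen c)).1,
           ((DTy.toList ν).get (Fin.cast hlen c)).2) := by
    intro c
    simp [toList_substSize, List.getElem_map, List.get_eq_getElem]
  apply Set.Subset.antisymm
  · refine mkDRed_mono hlen ?_
    intro c
    rw [hget c]
    exact ⟨rfl, fun p => hv _ p⟩
  · refine mkDRed_mono hlen.symm ?_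
    intro c
    have e : (DTy.toList (DTy.substSize i s ν)).get (Fin.cast hlen.symm c)
        = (STy.substSize i s ((DTy.toList ν).get c).1, ((DTy.toList ν).get c).2) :=
      hget (Fin.cast hlen.symm c)
    rw [e]
    exact ⟨rfl, fun p => (hv _ p).symm⟩

noncomputable def mkD : STy × ℝ≥0∞ → List (STy × ℝ≥0∞) → DTy
  | d, [] => .single d.1 d.2
  | d, e :: L => .cons d.1 d.2 (mkD e L)

theorem toList_mkD : ∀ d L, DTy.toList (mkD d L) = d :: L
  | _, [] => rfl
  | d, e :: L => by simp [mkD, DTy.toList, toList_mkD e L]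

def consE {α : Sort _} {N : ℕ} (z : α) (F : Fin N → α) : Fin (N + 1) → α
  | ⟨0, _⟩ => z
  | ⟨j + 1, h⟩ => F ⟨j, Nat.lt_of_succ_lt_succ h⟩

theorem sum_consE {N : ℕ} (z : ℝ≥0∞) (F : Fin N → ℝ≥0∞) :
    ∑ j : Fin (N + 1), consE z F j = z + ∑ j, F j := by
  rw [Fin.sum_univ_succ]
  exact congrArg₂ (· + ·) rfl (Finset.sum_congr rfl (fun i _ => rfl))

open Classical in
theorem pullback (i : ℕ) (s : Size) (κ : SimpleTy) (ρ ρ' : SEnv)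
    (hV : ∀ τ p, VRed κ (STy.substSize i s τ) ρ p = VRed κ τ ρ' p)
    (μ ν : DTy) (r : ℝ≥0∞)
    (hle : DTy.le ν (DTy.substSize i s μ))
    (her : ∀ e ∈ DTy.toList ν, STy.erase e.1 = κ)
    (D : Distr Val) (hD : D ∈ mkDRed (fun τ q => VRed κ τ ρ q) ν r) :
    ∃ ν' : DTy, DTy.le ν' μ ∧ (∀ e ∈ DTy.toList ν', STy.erase e.1 = κ) ∧
      D ∈ mkDRed (fun τ q => VRed κ τ ρ' q) ν' r := by
  classical
  set K := (DTy.toList ν).length with hK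
  set m := (DTy.toList μ).length with hm
  set τf : Fin K → STy := fun k => ((DTy.toList ν).get k).1 with hτf
  set qf : Fin K → ℝ≥0∞ := fun k => ((DTy.toList ν).get k).2 with hqf
  set σf : Fin m → STy := fun b => ((DTy.toList μ).get b).1 with hσf
  set Pf : Fin m → ℝ≥0∞ := fun b => ((DTy.toList μ).get b).2 with hPf
  obtain ⟨hfin, n, V, pr, hrep, pm, qm, h1, h2, h3, h4, h5, h6⟩ := hD
  -- finiteness of the weights of ν
  have hqfin : ∀ k, qf k ≠ ⊤ := by
    intro k
    have : qf k ≤ (n : ℝ≥0∞) := by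
      rw [hqf]
      simp only
      rw [← h5 k]
      calc (∑ a, pm a k) ≤ ∑ _a : Fin n, (1:ℝ≥0∞) := Finset.sum_le_sum (fun a _ => h1 a k)
        _ = n := by simp
    exact ne_top_of_le_ne_top (ENNReal.natCast_ne_top n) this
  have hpm0 : ∀ a k, qf k = 0 → pm a k = 0 := by
    intro a k h
    have h' : (∑ a, pm a k) = 0 := by rw [h5 k]; exact h
    exact Finset.sum_eq_zero_iff.mp h' a (Finset.mem_univ a)
  -- the supply condition
  have hlenμ : (DTy.toList (DTy.substSize i s μ)).length = m := by
    rw [toList_substSize]; simp [hm]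
  have hgetμ : ∀ c : Fin (DTy.toList (DTy.substSize i s μ)).length,
      (DTy.toList (DTy.substSize i s μ)).get c
        = (STy.substSize i s (σf (Fin.cast hlenμ c)), Pf (Fin.cast hlenμ c)) := by
    intro c
    simp [toList_substSize, List.getElem_map, List.get_eq_getElem, hσf, hPf]
  have hsupply : ∀ t : STy, (∑ k, if τf k = t then qf k else 0)
      ≤ ∑ b, if STy.substSize i s (σf b) = t then Pf b else 0 := by
    intro t
    have h' := hle t
    rw [prob_eq_sum, prob_eq_sum] at h'
    refine le_trans (le_of_eq ?_) (h'.trans (le_of_eq ?_))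
    · exact (Finset.sum_congr rfl (fun k _ => rfl))
    · refine Fintype.sum_equiv (finCongr hlenμ) _ _ ?_
      intro c
      rw [hgetμ c]
      rfl
  obtain ⟨A, hA0, hA2, hA3⟩ := allocAll K m τf qf (fun b => STy.substSize i s (σf b)) Pf
    hqfin hsupply
  have hAq : ∀ k b, A k b ≤ qf k := by
    intro k b
    rw [← hA2 k]
    exact Finset.single_le_sum (fun _ _ => zero_le) (Finset.mem_univ b)
  -- the pulled-back distribution type
  set E : Fin K × Fin m ≃ Fin (K * m) := finProdFinEquiv with hE
  set gfun : Fin K × Fin m → STy × ℝ≥0∞ := fun kb =>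
    (if STy.substSize i s (σf kb.2) = τf kb.1 then σf kb.2 else canon κ, A kb.1 kb.2)
    with hgfun
  set entriesFn : Fin (K * m) → STy × ℝ≥0∞ := fun j => gfun (E.symm j) with hent
  set ν' : DTy := mkD (canon κ, 0) (List.ofFn entriesFn) with hν'
  have hL : (DTy.toList ν').length = K * m + 1 := by
    rw [hν', toList_mkD]; simp
  have hget : ∀ (jv : ℕ) (hj1 : jv < (DTy.toList ν').length) (hj2 : jv < K * m + 1),
      (DTy.toList ν').get ⟨jv, hj1⟩ = consE (canon κ, (0:ℝ≥0∞)) entriesFn ⟨jv, hj2⟩ := by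
    intro jv hj1 hj2
    rw [List.get_eq_getElem]
    cases jv with
    | zero => simp [hν', toList_mkD, consE]
    | succ j =>
        have hlist : DTy.toList ν' = (canon κ, (0:ℝ≥0∞)) :: List.ofFn entriesFn := by
          rw [hν', toList_mkD]
        simp only [hlist, List.getElem_cons_succ, List.getElem_ofFn]
        rfl
  have hgc : ∀ c : Fin (DTy.toList ν').length,
      (DTy.toList ν').get c = consE (canon κ, (0:ℝ≥0∞)) entriesFn (Fin.cast hL c) :=
    fun c => hget c.1 c.2 (hL ▸ c.2)
  -- nonemptiness of ν and first column
  have hK1 : 0 < K := by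
    rw [hK]; cases ν <;> simp [DTy.toList]
  have hcanon : ∀ a : Fin n, V a ∈ VRed κ (canon κ) ρ' 0 := by
    intro a
    exact VRed_canon_zero κ (V a) ρ' (VRed_simpTy κ (τf ⟨0, hK1⟩) ρ _ (V a) (h3 a ⟨0, hK1⟩))
  -- division helpers
  have hdiv1 : ∀ k b, A k b / qf k ≤ 1 := by
    intro k b
    by_cases h0 : qf k = 0
    · have : A k b = 0 := le_antisymm (h0 ▸ hAq k b) (zero_le)
      simp [this]
    · rw [ENNReal.div_le_iff h0 (hqfin k), one_mul]
      exact hAq k b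
  have key1 : ∀ a k, (∑ b, pm a k * (A k b / qf k)) = pm a k := by
    intro a k
    by_cases h0 : qf k = 0
    · rw [hpm0 a k h0]; simp
    · rw [← Finset.mul_sum]
      have : (∑ b, A k b / qf k) = 1 := by
        simp only [div_eq_mul_inv, ← Finset.sum_mul]
        rw [hA2 k]
        exact ENNReal.mul_inv_cancel h0 (hqfin k)
      rw [this, mul_one]
  have key2 : ∀ k b, (∑ a, pm a k * (A k b / qf k)) = A k b := by
    intro k b
    rw [← Finset.sum_mul, h5 k]
    by_cases h0 : qf k = 0
    · have hA : A k b = 0 := le_antisymm (h0 ▸ hAq k b) (zero_le)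
      rw [show ((DTy.toList ν).get k).2 = qf k from rfl, h0, hA]
      simp
    · rw [show ((DTy.toList ν).get k).2 = qf k from rfl]
      exact ENNReal.mul_div_cancel h0 (hqfin k)
  have key3 : ∀ a k, (∑ b, (if STy.substSize i s (σf b) = τf k then qm a k else 0)
      * (pm a k * (A k b / qf k))) = qm a k * pm a k := by
    intro a k
    by_cases h0 : qf k = 0
    · rw [hpm0 a k h0]; simp
    · have he : ∀ b, (if STy.substSize i s (σf b) = τf k then qm a k else 0)
          * (pm a k * (A k b / qf k)) = qm a k * (pm a k * (A k b / qf k)) := by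
        intro b
        by_cases hedge : STy.substSize i s (σf b) = τf k
        · rw [if_pos hedge]
        · rw [if_neg hedge, hA0 k b hedge]
          simp
      rw [Finset.sum_congr rfl (fun b _ => he b), ← Finset.mul_sum, key1 a k]
  -- matrices
  set F : Fin n → Fin K × Fin m → ℝ≥0∞ := fun a kb => pm a kb.1 * (A kb.1 kb.2 / qf kb.1)
    with hF
  set G : Fin n → Fin K × Fin m → ℝ≥0∞ := fun a kb =>
    if STy.substSize i s (σf kb.2) = τf kb.1 then qm a kb.1 else 0 with hG
  refine ⟨ν', ?_, ?_, hfin, n, V, pr, hrep,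
    fun a c => consE 0 (fun j => F a (E.symm j)) (Fin.cast hL c),
    fun a c => consE 0 (fun j => G a (E.symm j)) (Fin.cast hL c),
    ?_, ?_, ?_, ?_, ?_, ?_⟩
  -- DTy.le ν' μ
  · intro t
    rw [prob_eq_sum, prob_eq_sum]
    calc (∑ c : Fin (DTy.toList ν').length,
          if ((DTy.toList ν').get c).1 = t then ((DTy.toList ν').get c).2 else 0)
        = ∑ j : Fin (K * m + 1),
            if (consE (canon κ, (0:ℝ≥0∞)) entriesFn j).1 = t
            then (consE (canon κ, (0:ℝ≥0∞)) entriesFn j).2 else 0 := by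
          refine Fintype.sum_equiv (finCongr hL) _ _ ?_
          intro c
          rw [hgc c]
          rfl
      _ = ∑ j : Fin (K * m + 1),
            consE 0 (fun j' => if (entriesFn j').1 = t then (entriesFn j').2 else 0) j :=
          Finset.sum_congr rfl (fun j _ => by
            rcases j with ⟨jv, hjlt⟩
            cases jv with
            | zero => show (if canon κ = t then (0:ℝ≥0∞) else 0) = 0; split <;> rfl
            | succ jw => rfl)
      _ = 0 + ∑ j', (if (entriesFn j').1 = t then (entriesFn j').2 else 0) := sum_consE _ _
      _ = ∑ kb : Fin K × Fin m, (if (gfun kb).1 = t then (gfun kb).2 else 0) := by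
          rw [zero_add]
          exact Equiv.sum_comp E.symm (fun kb => if (gfun kb).1 = t then (gfun kb).2 else 0)
      _ = ∑ k, ∑ b, (if (gfun (k, b)).1 = t then (gfun (k, b)).2 else 0) :=
          Fintype.sum_prod_type _
      _ ≤ ∑ b : Fin (DTy.toList μ).length,
            if ((DTy.toList μ).get b).1 = t then ((DTy.toList μ).get b).2 else 0 := by
          rw [Finset.sum_comm]
          refine Finset.sum_le_sum ?_
          intro b _
          have hbound : ∀ k, (if (gfun (k, b)).1 = t then (gfun (k, b)).2 else 0)
              ≤ if σf b = t then A k b else 0 := by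
            intro k
            show (if (if STy.substSize i s (σf b) = τf k then σf b else canon κ) = t
                then A k b else 0) ≤ _
            by_cases hedge : STy.substSize i s (σf b) = τf k
            · rw [if_pos hedge]
            · rw [if_neg hedge, hA0 k b hedge]
              split <;> simp
          refine le_trans (Finset.sum_le_sum (fun k _ => hbound k)) ?_
          by_cases hb : σf b = t
          · simp only [if_pos hb, if_pos (show ((DTy.toList μ).get b).1 = t from hb)]
            exact hA3 b
          · simp [hb]
  -- erasure
  · intro e he
    rw [hν', toList_mkD] at he
    rcases List.mem_cons.mp he with h | h
    · rw [h]; exact erase_canon κ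
    · obtain ⟨j, hj⟩ := List.mem_ofFn.mp h
      rw [← hj]
      show STy.erase (if STy.substSize i s (σf (E.symm j).2) = τf (E.symm j).1
        then σf (E.symm j).2 else canon κ) = κ
      by_cases hedge : STy.substSize i s (σf (E.symm j).2) = τf (E.symm j).1
      · rw [if_pos hedge]
        have e1 : STy.erase (STy.substSize i s (σf (E.symm j).2)) = κ := by
          rw [hedge]
          exact her ((DTy.toList ν).get (E.symm j).1) (List.get_mem _ _)
        rw [← erase_substS i s (σf (E.symm j).2)]
        exact e1
      · rw [if_neg hedge]
        exact erase_canon κ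
  -- pm' ≤ 1
  · intro a c
    show consE 0 (fun j => F a (E.symm j)) (Fin.cast hL c) ≤ 1
    rcases hj : Fin.cast hL c with ⟨jv, hjlt⟩
    cases jv with
    | zero => exact zero_le_one
    | succ j => exact mul_le_one' (h1 a _) (hdiv1 _ _)
  -- qm' ≤ 1
  · intro a c
    show consE 0 (fun j => G a (E.symm j)) (Fin.cast hL c) ≤ 1
    rcases hj : Fin.cast hL c with ⟨jv, hjlt⟩
    cases jv with
    | zero => exact zero_le_one
    | succ j =>
        show (if STy.substSize i s (σf (E.symm ⟨j, Nat.lt_of_succ_lt_succ hjlt⟩).2)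
            = τf (E.symm ⟨j, Nat.lt_of_succ_lt_succ hjlt⟩).1
          then qm a (E.symm ⟨j, Nat.lt_of_succ_lt_succ hjlt⟩).1 else 0) ≤ 1
        split
        · exact h2 a _
        · exact zero_le_one
  -- membership
  · intro a c
    show V a ∈ VRed κ ((DTy.toList ν').get c).1 ρ'
      (consE 0 (fun j => G a (E.symm j)) (Fin.cast hL c))
    rw [hgc c]
    rcases hj : Fin.cast hL c with ⟨jv, hjlt⟩
    cases jv with
    | zero => exact hcanon a
    | succ j =>
        show V a ∈ VRed κ (gfun (E.symm ⟨j, Nat.lt_of_succ_lt_succ hjlt⟩)).1 ρ'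
          (G a (E.symm ⟨j, Nat.lt_of_succ_lt_succ hjlt⟩))
        obtain ⟨k, b⟩ := E.symm ⟨j, Nat.lt_of_succ_lt_succ hjlt⟩
        show V a ∈ VRed κ (if STy.substSize i s (σf b) = τf k then σf b else canon κ) ρ'
          (if STy.substSize i s (σf b) = τf k then qm a k else 0)
        by_cases hedge : STy.substSize i s (σf b) = τf k
        · rw [if_pos hedge, if_pos hedge, ← hV (σf b) (qm a k), hedge]
          exact h3 a k
        · rw [if_neg hedge, if_neg hedge]
          exact hcanon a
  -- row sums
  · intro a
    show (∑ c : Fin (DTy.toList ν').length,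
        consE 0 (fun j => F a (E.symm j)) (Fin.cast hL c)) = pr a
    calc (∑ c : Fin (DTy.toList ν').length,
          consE 0 (fun j => F a (E.symm j)) (Fin.cast hL c))
        = ∑ j : Fin (K * m + 1), consE 0 (fun j' => F a (E.symm j')) j :=
          Fintype.sum_equiv (finCongr hL) _ _ (fun c => rfl)
      _ = 0 + ∑ j', F a (E.symm j') := sum_consE _ _
      _ = ∑ kb : Fin K × Fin m, F a kb := by
          rw [zero_add]; exact Equiv.sum_comp E.symm (F a)
      _ = ∑ k, ∑ b, F a (k, b) := Fintype.sum_prod_type _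
      _ = ∑ k, pm a k := Finset.sum_congr rfl (fun k _ => key1 a k)
      _ = pr a := h4 a
  -- column sums
  · intro c
    show (∑ a, consE 0 (fun j => F a (E.symm j)) (Fin.cast hL c))
      = ((DTy.toList ν').get c).2
    rw [hgc c]
    rcases hj : Fin.cast hL c with ⟨jv, hjlt⟩
    cases jv with
    | zero =>
        show (∑ _a : Fin n, (0:ℝ≥0∞)) = 0
        simp
    | succ j =>
        show (∑ a, F a (E.symm ⟨j, Nat.lt_of_succ_lt_succ hjlt⟩))
          = (gfun (E.symm ⟨j, Nat.lt_of_succ_lt_succ hjlt⟩)).2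
        obtain ⟨k, b⟩ := E.symm ⟨j, Nat.lt_of_succ_lt_succ hjlt⟩
        exact key2 k b
  -- the bound
  · refine le_trans h6 (le_of_eq ?_)
    refine Finset.sum_congr rfl ?_
    intro a _
    show (∑ k, qm a k * pm a k)
      = ∑ c : Fin (DTy.toList ν').length,
          consE 0 (fun j => G a (E.symm j)) (Fin.cast hL c)
            * consE 0 (fun j => F a (E.symm j)) (Fin.cast hL c)
    refine Eq.symm ?_
    calc (∑ c : Fin (DTy.toList ν').length,
          consE 0 (fun j => G a (E.symm j)) (Fin.cast hL c)
            * consE 0 (fun j => F a (E.symm j)) (Fin.cast hL c))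
        = ∑ j : Fin (K * m + 1),
            consE 0 (fun j' => G a (E.symm j')) j * consE 0 (fun j' => F a (E.symm j')) j :=
          Fintype.sum_equiv (finCongr hL) _ _ (fun c => rfl)
      _ = ∑ j : Fin (K * m + 1), consE 0 (fun j' => G a (E.symm j') * F a (E.symm j')) j :=
          Finset.sum_congr rfl (fun j _ => by
            rcases j with ⟨jv, hjlt⟩
            cases jv with
            | zero => simp [consE]
            | succ jw => rfl)
      _ = 0 + ∑ j', G a (E.symm j') * F a (E.symm j') := sum_consE _ _
      _ = ∑ kb : Fin K × Fin m, G a kb * F a kb := by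
          rw [zero_add]; exact Equiv.sum_comp E.symm (fun kb => G a kb * F a kb)
      _ = ∑ k, ∑ b, G a (k, b) * F a (k, b) := Fintype.sum_prod_type _
      _ = ∑ k, qm a k * pm a k := Finset.sum_congr rfl (fun k _ => key3 a k)

open Classical in
theorem mkTRed_subst (i : ℕ) (s : Size) (κ : SimpleTy) (ρ ρ' : SEnv)
    (hV : ∀ τ p, VRed κ (STy.substSize i s τ) ρ p = VRed κ τ ρ' p) (μ : DTy) (p : ℝ≥0∞) :
    mkTRed κ (fun τ q => VRed κ τ ρ q) (DTy.substSize i s μ) p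
      = mkTRed κ (fun τ q => VRed κ τ ρ' q) μ p := by
  ext M
  simp only [mkTRed, Set.mem_setOf_eq]
  constructor
  · rintro ⟨hty, h⟩
    refine ⟨hty, ?_⟩
    intro r hr
    obtain ⟨ν, hle, her, n, hn⟩ := h r hr
    obtain ⟨ν', hle', her', hn'⟩ := pullback i s κ ρ ρ' hV μ ν r hle her _ hn
    exact ⟨ν', hle', her', n, hn'⟩
  · rintro ⟨hty, h⟩
    refine ⟨hty, ?_⟩
    intro r hr
    obtain ⟨ν, hle, her, n, hn⟩ := h r hr
    refine ⟨DTy.substSize i s ν, DTy.le_substSize i s hle, ?_, n, ?_⟩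
    · intro e he
      rw [toList_substSize] at he
      obtain ⟨e', he', rfl⟩ := List.mem_map.mp he
      show STy.erase (STy.substSize i s e'.1) = κ
      rw [erase_substS]
      exact her e' he'
    · rw [mkDRed_subst i s ν hV r]
      exact hn

theorem VRed_subst (i : ℕ) (s : Size) : ∀ (κ : SimpleTy) (σ : STy) (ρ : SEnv) (p : ℝ≥0∞),
    VRed κ (STy.substSize i s σ) ρ p
      = VRed κ σ (Function.update ρ i (Size.interp ρ s)) p
  | .nat, .nat r, ρ, p => by
      ext v
      simp [VRed, STy.substSize, interp_subst i s ρ r]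
  | .nat, .arrow _ _, ρ, p => by simp [STy.substSize, VRed]
  | .arrow _ _, .nat _, ρ, p => by simp [STy.substSize, VRed]
  | .arrow κ κ', .arrow σ' μ', ρ, p => by
      ext v
      show (SimpTyV SCtx.empty v (.arrow κ κ') ∧ ∀ q : ℝ≥0∞, 0 < q → q ≤ 1 →
          ∀ w ∈ VRed κ (STy.substSize i s σ') ρ q,
            Tm.app v w ∈ mkTRed κ' (fun τ r => VRed κ' τ ρ r) (DTy.substSize i s μ') (p * q))
        ↔ (SimpTyV SCtx.empty v (.arrow κ κ') ∧ ∀ q : ℝ≥0∞, 0 < q → q ≤ 1 →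
          ∀ w ∈ VRed κ σ' (Function.update ρ i (Size.interp ρ s)) q,
            Tm.app v w ∈ mkTRed κ'
              (fun τ r => VRed κ' τ (Function.update ρ i (Size.interp ρ s)) r) μ' (p * q))
      have hκ' : ∀ τ q, VRed κ' (STy.substSize i s τ) ρ q
          = VRed κ' τ (Function.update ρ i (Size.interp ρ s)) q :=
        fun τ q => VRed_subst i s κ' τ ρ q
      constructor
      · rintro ⟨hty, h⟩
        refine ⟨hty, ?_⟩
        intro q hq hq1 w hw
        rw [← VRed_subst i s κ σ' ρ q] at hw
        have := h q hq hq1 w hw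
        rwa [mkTRed_subst i s κ' ρ (Function.update ρ i (Size.interp ρ s)) hκ' μ' (p * q)]
          at this
      · rintro ⟨hty, h⟩
        refine ⟨hty, ?_⟩
        intro q hq hq1 w hw
        rw [VRed_subst i s κ σ' ρ q] at hw
        have := h q hq hq1 w hw
        rwa [mkTRed_subst i s κ' ρ (Function.update ρ i (Size.interp ρ s)) hκ' μ' (p * q)]

/-- Size commutation: if `s = ∞` or the spine variable of `s` is different
from `i`, then `VRed^p_{σ[s/i],ρ} = VRed^p_{σ,ρ[i↦⟦s⟧_ρ]}`, and similarly for `DRed`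
and `TRed`. -/
theorem size_commutation (i : ℕ) (s : Size) (hs : Size.spine s ≠ some i)
    (σ : STy) (μ : DTy) (ρ : SEnv) (p : ℝ≥0∞) (hp : p ≤ 1) :
    (VRedS (STy.substSize i s σ) ρ p =
      VRedS σ (Function.update ρ i (Size.interp ρ s)) p) ∧
    (DRedS (DTy.substSize i s μ) ρ p =
      DRedS μ (Function.update ρ i (Size.interp ρ s)) p) ∧
    (TRedS (DTy.substSize i s μ) ρ p =
      TRedS μ (Function.update ρ i (Size.interp ρ s)) p) := by
  refine ⟨?_, ?_, ?_⟩
  · unfold VRedS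
    rw [erase_substS]
    exact VRed_subst i s (STy.erase σ) σ ρ p
  · unfold DRedS
    rw [erase_substD]
    exact mkDRed_subst i s μ (fun τ q => VRed_subst i s (DTy.eraseU μ) τ ρ q) p
  · unfold TRedS
    rw [erase_substD]
    exact mkTRed_subst i s (DTy.eraseU μ) ρ (Function.update ρ i (Size.interp ρ s))
      (fun τ q => VRed_subst i s (DTy.eraseU μ) τ ρ q) μ p
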